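/- Let α₁, β₁ be real numbers. The double inequality α₁·C(a,b) + (1−α₁)·A(a,b) < T(a,b) < β₁·C(a,b) + (1−β₁)·A(a,b) holds for all positive real numbers a, b with a ≠ b if and only if α₁ ≤ 4/π − 1 and β₁ ≥ 1/3. -/

import Mathlib

open Real

/-- The Seiffert mean of two positive reals. -/
noncomputable def seiffertT (a b : ℝ) : ℝ := (a - b) / (2 * Real.arctan ((a - b) / (a + b)))

/-- The arithmetic mean of two positive reals. -/
noncomputable def arithMean (a b : ℝ) : ℝ := (a + b) / 2

/-- The contra-harmonic mean of two positive reals. -/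
noncomputable def contraharmonicMean (a b : ℝ) : ℝ := (a ^ 2 + b ^ 2) / (a + b)

open Set

lemma one_add_sq_pos (t : ℝ) : (0:ℝ) < 1 + t^2 := by positivity

lemma arctan_pos' {x : ℝ} (hx : 0 < x) : 0 < arctan x := by
  have h := Real.arctan_strictMono hx
  simpa [Real.arctan_zero] using h

lemma arctan_lt_self' {x : ℝ} (hx : 0 < x) : arctan x < x := by
  set g : ℝ → ℝ := fun t => t - arctan t with hg
  have hd : ∀ t : ℝ, HasDerivAt g (t^2/(1+t^2)) t := by
    intro t
    have h := (hasDerivAt_id t).sub (Real.hasDerivAt_arctan t)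
    refine h.congr_deriv ?_
    field_simp
    ring
  have hgc : Continuous g := continuous_id.sub Real.continuous_arctan
  have hmono : StrictMonoOn g (Ici 0) := by
    refine strictMonoOn_of_deriv_pos (convex_Ici 0) hgc.continuousOn (fun t ht => ?_)
    rw [interior_Ici] at ht
    rw [(hd t).deriv]
    have ht' : (0:ℝ) < t := ht
    positivity
  have h0 : g 0 = 0 := by simp [hg]
  have := hmono (self_mem_Ici) (mem_Ici.mpr hx.le) hx
  rw [h0] at this
  simp only [hg] at this
  linarith

lemma div_lt_arctan {x : ℝ} (hx : 0 < x) : x / (1 + x^2) < arctan x := by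
  set g : ℝ → ℝ := fun t => arctan t - t / (1 + t^2) with hg
  have hd : ∀ t : ℝ, HasDerivAt g (2*t^2/(1+t^2)^2) t := by
    intro t
    have h := (Real.hasDerivAt_arctan t).sub
      ((hasDerivAt_id t).div ((hasDerivAt_pow 2 t).const_add 1) (one_add_sq_pos t).ne')
    refine h.congr_deriv ?_
    simp only [id]
    field_simp
    ring
  have hgc : Continuous g := Real.continuous_arctan.sub
    (continuous_id.div (by continuity) fun t => (one_add_sq_pos t).ne')
  have hmono : StrictMonoOn g (Ici 0) := by
    refine strictMonoOn_of_deriv_pos (convex_Ici 0) hgc.continuousOn (fun t ht => ?_)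
    rw [interior_Ici] at ht
    rw [(hd t).deriv]
    have ht' : (0:ℝ) < t := ht
    positivity
  have h0 : g 0 = 0 := by simp [hg]
  have := hmono (self_mem_Ici) (mem_Ici.mpr hx.le) hx
  rw [h0] at this
  simp only [hg] at this
  linarith

lemma arctan_lt_poly {x : ℝ} (hx : 0 < x) : arctan x < x - x^3/3 + x^5/5 := by
  set g : ℝ → ℝ := fun t => t - t^3/3 + t^5/5 - arctan t with hg
  have hd : ∀ t : ℝ, HasDerivAt g (t^6/(1+t^2)) t := by
    intro t
    have h := ((((hasDerivAt_id t).sub (((hasDerivAt_pow 3 t).div_const 3))).add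
      ((hasDerivAt_pow 5 t).div_const 5)).sub (Real.hasDerivAt_arctan t))
    refine h.congr_deriv ?_
    field_simp
    ring
  have hgc : Continuous g := by
    have : Continuous fun t : ℝ => t - t^3/3 + t^5/5 := by continuity
    exact this.sub Real.continuous_arctan
  have hmono : StrictMonoOn g (Ici 0) := by
    refine strictMonoOn_of_deriv_pos (convex_Ici 0) hgc.continuousOn (fun t ht => ?_)
    rw [interior_Ici] at ht
    rw [(hd t).deriv]
    have ht' : (0:ℝ) < t := ht
    positivity
  have h0 : g 0 = 0 := by simp [hg]
  have := hmono (self_mem_Ici) (mem_Ici.mpr hx.le) hx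
  rw [h0] at this
  simp only [hg] at this
  linarith

lemma three_lt_arctan {x : ℝ} (hx : 0 < x) : 3*x < (3 + x^2) * arctan x := by
  set g : ℝ → ℝ := fun t => (3 + t^2) * arctan t - 3*t with hg
  have hd : ∀ t : ℝ, HasDerivAt g (2*t*arctan t + (3+t^2)*(1/(1+t^2)) - 3) t := by
    intro t
    have h := ((((hasDerivAt_pow 2 t).const_add 3).mul (Real.hasDerivAt_arctan t)).sub
      ((hasDerivAt_id t).const_mul 3))
    refine h.congr_deriv ?_
    ring
  have hgc : Continuous g := by
    exact ((by continuity : Continuous fun t:ℝ => 3+t^2).mul Real.continuous_arctan).sub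
      (by continuity)
  have hmono : StrictMonoOn g (Ici 0) := by
    refine strictMonoOn_of_deriv_pos (convex_Ici 0) hgc.continuousOn (fun t ht => ?_)
    rw [interior_Ici] at ht
    rw [(hd t).deriv]
    have ht' : (0:ℝ) < t := ht
    have h1 := div_lt_arctan ht'
    have h2 : 2 * t * arctan t + (3 + t ^ 2) * (1 / (1 + t ^ 2)) - 3
        = 2 * t * (arctan t - t / (1 + t ^ 2)) := by
      field_simp
      ring
    rw [h2]
    exact mul_pos (by linarith) (sub_pos.mpr h1)
  have h0 : g 0 = 0 := by simp [hg]
  have := hmono (self_mem_Ici) (mem_Ici.mpr hx.le) hx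
  rw [h0] at this
  simp only [hg] at this
  linarith

lemma sharp_left {x : ℝ} (hx0 : 0 < x) (hx1 : x < 1) :
    (1 + (4/π - 1) * x^2) * arctan x < x := by
  have hπ : (0:ℝ) < π := pi_pos
  have hπ3 : (3:ℝ) < π := pi_gt_three
  have hπ4 : π < 3.15 := pi_lt_d2
  set c : ℝ := 4/π - 1 with hc
  have hc0 : 0 < c := by
    rw [hc, sub_pos, lt_div_iff₀ hπ]; linarith
  have hc3 : 3*c < 1 := by
    rw [hc]; rw [show (3:ℝ)*(4/π-1) = 12/π - 3 by ring]
    rw [div_sub' hπ.ne', div_lt_one hπ]; nlinarith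
  have hc1 : 1 + c = 4/π := by rw [hc]; ring
  -- the function m
  set m : ℝ → ℝ := fun t => (1 - c) * t / (1 + t^2) - 2*c*arctan t with hm
  have hmc : Continuous m := by
    apply Continuous.sub
    · exact (continuous_const.mul continuous_id).div (by continuity)
        fun t => (one_add_sq_pos t).ne'
    · exact continuous_const.mul Real.continuous_arctan
  have hmd : ∀ t : ℝ, HasDerivAt m (((1 - 3*c) - (1+c)*t^2) / (1+t^2)^2) t := by
    intro t
    have h := (((hasDerivAt_id t).const_mul (1-c)).div
      ((hasDerivAt_pow 2 t).const_add 1) (one_add_sq_pos t).ne').sub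
      ((Real.hasDerivAt_arctan t).const_mul (2*c))
    refine h.congr_deriv ?_
    simp only [id]
    field_simp
    ring
  -- x₀ = sqrt (π - 3)
  set x₀ : ℝ := Real.sqrt (π - 3) with hx₀
  have hx₀sq : x₀^2 = π - 3 := Real.sq_sqrt (by linarith)
  have hx₀pos : 0 < x₀ := Real.sqrt_pos.mpr (by linarith)
  have hx₀lt : x₀ < 1 := by
    nlinarith [hx₀sq, hx₀pos]
  -- derivative sign: ((1-3c) - (1+c)t^2) sign ↔ t^2 vs π-3
  have hsgn : ∀ t : ℝ, (1 - 3*c) - (1+c)*t^2 = (4/π) * ((π-3) - t^2) := by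
    intro t
    rw [hc]
    field_simp
    ring
  have hmono : StrictMonoOn m (Icc 0 x₀) := by
    refine strictMonoOn_of_deriv_pos (convex_Icc 0 x₀) hmc.continuousOn (fun t ht => ?_)
    rw [interior_Icc] at ht
    rw [(hmd t).deriv, hsgn t]
    have h1 : t^2 < π - 3 := by nlinarith [ht.1, ht.2, hx₀sq]
    have : 0 < (4/π) * ((π-3) - t^2) := by
      apply mul_pos (by positivity); linarith
    positivity
  have hanti : StrictAntiOn m (Icc x₀ 1) := by
    refine strictAntiOn_of_deriv_neg (convex_Icc x₀ 1) hmc.continuousOn (fun t ht => ?_)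
    rw [interior_Icc] at ht
    rw [(hmd t).deriv, hsgn t]
    have h1 : π - 3 < t^2 := by nlinarith [ht.1, ht.2, hx₀sq, hx₀pos]
    apply div_neg_of_neg_of_pos _ (by positivity)
    apply mul_neg_of_pos_of_neg (by positivity)
    linarith
  have hm0 : m 0 = 0 := by simp [hm]
  have hmx₀ : 0 < m x₀ := by
    have := hmono (left_mem_Icc.mpr hx₀pos.le) (right_mem_Icc.mpr hx₀pos.le) hx₀pos
    rwa [hm0] at this
  have hm1 : m 1 < 0 := by
    have h1 : m 1 = (1-c)/2 - 2*c*(π/4) := by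
      simp [hm, Real.arctan_one]; ring
    rw [h1, hc]
    rw [show (1-(4/π-1))/2 - 2*(4/π-1)*(π/4) = (2-4/π)/2 - (4-π)/2 by field_simp; ring]
    have : (2:ℝ) - 4/π < 4 - π := by
      rw [sub_lt_iff_lt_add]
      have h2 : (4:ℝ)/3.15 < 4/π := div_lt_div_of_pos_left (by norm_num) hπ hπ4
      linarith
    linarith
  -- x₁: zero of m in (x₀, 1)
  obtain ⟨x₁, hx₁mem, hx₁⟩ : ∃ x₁ ∈ Ioo x₀ 1, m x₁ = 0 := by
    have h := intermediate_value_Ioo' hx₀lt.le hmc.continuousOn (a := x₀) (b := 1)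
    have h0 : (0:ℝ) ∈ Ioo (m 1) (m x₀) := ⟨hm1, hmx₀⟩
    obtain ⟨y, hy, hy0⟩ := h h0
    exact ⟨y, hy, hy0⟩
  have hx₁pos : 0 < x₁ := hx₀pos.trans hx₁mem.1
  -- m > 0 on (0, x₁), m < 0 on (x₁, 1)
  have hmpos : ∀ t, 0 < t → t < x₁ → 0 < m t := by
    intro t ht0 htx₁
    rcases le_or_gt t x₀ with h | h
    · have := hmono (left_mem_Icc.mpr hx₀pos.le) ⟨ht0.le, h⟩ ht0
      rwa [hm0] at this
    · have := hanti ⟨h.le, by linarith [hx₁mem.2]⟩ ⟨hx₁mem.1.le, hx₁mem.2.le⟩ htx₁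
      rwa [hx₁] at this
  have hmneg : ∀ t, x₁ < t → t ≤ 1 → m t < 0 := by
    intro t ht1 ht2
    have := hanti ⟨hx₁mem.1.le, hx₁mem.2.le⟩ ⟨(hx₁mem.1.trans ht1).le, ht2⟩ ht1
    rwa [hx₁] at this
  -- k
  set k : ℝ → ℝ := fun t => t - (1 + c*t^2) * arctan t with hk
  have hkc : Continuous k := by
    apply Continuous.sub continuous_id
    exact (continuous_const.add (continuous_const.mul (continuous_pow 2))).mul
      Real.continuous_arctan
  have hkd : ∀ t : ℝ, HasDerivAt k (t * m t) t := by
    intro t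
    have h := (hasDerivAt_id t).sub
      ((((hasDerivAt_pow 2 t).const_mul c).const_add 1).mul (Real.hasDerivAt_arctan t))
    refine h.congr_deriv ?_
    simp only [hm]
    field_simp
    ring
  have hk0 : k 0 = 0 := by simp [hk]
  have hk1 : k 1 = 0 := by
    simp only [hk, one_pow, mul_one, Real.arctan_one, hc1]
    field_simp
    norm_num
  have hkmono : StrictMonoOn k (Icc 0 x₁) := by
    refine strictMonoOn_of_deriv_pos (convex_Icc 0 x₁) hkc.continuousOn (fun t ht => ?_)
    rw [interior_Icc] at ht
    rw [(hkd t).deriv]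
    exact mul_pos ht.1 (hmpos t ht.1 ht.2)
  have hkanti : StrictAntiOn k (Icc x₁ 1) := by
    refine strictAntiOn_of_deriv_neg (convex_Icc x₁ 1) hkc.continuousOn (fun t ht => ?_)
    rw [interior_Icc] at ht
    rw [(hkd t).deriv]
    exact mul_neg_of_pos_of_neg (hx₁pos.trans ht.1) (hmneg t ht.1 ht.2.le)
  have hkx : 0 < k x := by
    rcases le_or_gt x x₁ with h | h
    · have := hkmono (left_mem_Icc.mpr (hx₁pos.le)) ⟨hx0.le, h⟩ hx0
      rwa [hk0] at this
    · have := hkanti ⟨h.le, hx1.le⟩ (right_mem_Icc.mpr hx₁mem.2.le) hx1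
      rwa [hk1] at this
  simp only [hk] at hkx
  linarith

lemma key_ineq {α β y : ℝ} (hα : α ≤ 4/π - 1) (hβ : 1/3 ≤ β) (hy0 : 0 < y) (hy1 : y < 1) :
    (1 + α*y^2) * arctan y < y ∧ y < (1 + β*y^2) * arctan y := by
  have ha := arctan_pos' hy0
  constructor
  · have h1 := sharp_left hy0 hy1
    have h2 : (1 + α*y^2) * arctan y ≤ (1 + (4/π - 1)*y^2) * arctan y := by
      apply mul_le_mul_of_nonneg_right _ ha.le
      nlinarith [sq_nonneg y]
    linarith
  · have h1 := three_lt_arctan hy0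
    have h2 : (1 + (1/3)*y^2) * arctan y ≤ (1 + β*y^2) * arctan y := by
      apply mul_le_mul_of_nonneg_right _ ha.le
      nlinarith [sq_nonneg y]
    nlinarith

lemma seiffertT_comm (a b : ℝ) : seiffertT a b = seiffertT b a := by
  unfold seiffertT
  rw [add_comm b a, show b - a = -(a-b) by ring,
    show -(a-b)/(a+b) = -((a-b)/(a+b)) from neg_div _ _, Real.arctan_neg]
  ring

lemma arithMean_comm (a b : ℝ) : arithMean a b = arithMean b a := by
  unfold arithMean; ring

lemma contraharmonicMean_comm (a b : ℝ) : contraharmonicMean a b = contraharmonicMean b a := by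
  unfold contraharmonicMean; rw [add_comm b a, add_comm (b^2) (a^2)]

lemma means_eq (a b γ : ℝ) (hs : 0 < a + b) :
    γ * contraharmonicMean a b + (1-γ) * arithMean a b
      = (a+b)/2 * (1 + γ * ((a-b)/(a+b))^2) := by
  unfold contraharmonicMean arithMean
  field_simp
  ring

lemma suff_side {α β : ℝ} (hα : α ≤ 4/π - 1) (hβ : 1/3 ≤ β) (a b : ℝ)
    (ha : 0 < a) (hb : 0 < b) (hba : b < a) :
    α * contraharmonicMean a b + (1 - α) * arithMean a b < seiffertT a b ∧
    seiffertT a b < β * contraharmonicMean a b + (1 - β) * arithMean a b := by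
  have hs : 0 < a + b := by linarith
  set y : ℝ := (a-b)/(a+b) with hy
  have hy0 : 0 < y := div_pos (by linarith) hs
  have hy1 : y < 1 := by rw [hy, div_lt_one hs]; linarith
  have harc := arctan_pos' hy0
  obtain ⟨h1, h2⟩ := key_ineq hα hβ hy0 hy1
  have hT : seiffertT a b = (a+b)/2 * (y / arctan y) := by
    unfold seiffertT
    rw [← hy, div_mul_div_comm, show (a+b)*y = a - b by rw [hy]; field_simp]
  constructor
  · rw [means_eq a b α hs, ← hy, hT]
    apply mul_lt_mul_of_pos_left _ (by linarith : (0:ℝ) < (a+b)/2)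
    rw [lt_div_iff₀ harc]
    linarith
  · rw [means_eq a b β hs, ← hy, hT]
    apply mul_lt_mul_of_pos_left _ (by linarith : (0:ℝ) < (a+b)/2)
    rw [div_lt_iff₀ harc]
    linarith

lemma nec_key {α β : ℝ}
    (H : ∀ a b : ℝ, 0 < a → 0 < b → a ≠ b →
        α * contraharmonicMean a b + (1 - α) * arithMean a b < seiffertT a b ∧
        seiffertT a b < β * contraharmonicMean a b + (1 - β) * arithMean a b)
    {x : ℝ} (hx0 : 0 < x) (hx1 : x < 1) :
    (1 + α*x^2) * arctan x < x ∧ x < (1 + β*x^2) * arctan x := by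
  have hne : (1:ℝ) + x ≠ 1 - x := by intro he; linarith
  have h := H (1+x) (1-x) (by linarith) (by linarith) hne
  have e1 : (1+x) - (1-x) = 2*x := by ring
  have e2 : (1+x) + (1-x) = 2 := by ring
  have harc := arctan_pos' hx0
  have hsT : seiffertT (1+x) (1-x) = x / arctan x := by
    unfold seiffertT
    rw [e1, e2, show (2*x)/(2:ℝ) = x by ring]
    ring
  have hsA : arithMean (1+x) (1-x) = 1 := by
    unfold arithMean; rw [e2]; norm_num
  have hsC : contraharmonicMean (1+x) (1-x) = 1 + x^2 := by
    unfold contraharmonicMean; rw [e2]; ring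
  rw [hsT, hsA, hsC] at h
  constructor
  · have h1 := h.1
    rw [lt_div_iff₀ harc] at h1
    calc (1 + α*x^2) * arctan x = (α*(1+x^2) + (1-α)*1) * arctan x := by ring
      _ < x := h1
  · have h2 := h.2
    rw [div_lt_iff₀ harc] at h2
    calc x < (β*(1+x^2) + (1-β)*1) * arctan x := h2
      _ = (1 + β*x^2) * arctan x := by ring

lemma nec {α β : ℝ}
    (H : ∀ a b : ℝ, 0 < a → 0 < b → a ≠ b →
        α * contraharmonicMean a b + (1 - α) * arithMean a b < seiffertT a b ∧
        seiffertT a b < β * contraharmonicMean a b + (1 - β) * arithMean a b) :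
    α ≤ 4/π - 1 ∧ 1/3 ≤ β := by
  constructor
  · -- use continuity at 1
    set G : ℝ → ℝ := fun x => x - (1 + α*x^2) * arctan x with hG
    have hGc : Continuous G := by
      apply Continuous.sub continuous_id
      exact (continuous_const.add (continuous_const.mul (continuous_pow 2))).mul
        Real.continuous_arctan
    have htend : Filter.Tendsto G (nhdsWithin 1 (Iio 1)) (nhds (G 1)) :=
      (hGc.tendsto 1).mono_left nhdsWithin_le_nhds
    have hev : ∀ᶠ x in nhdsWithin 1 (Iio 1), 0 ≤ G x := by
      filter_upwards [Ioo_mem_nhdsLT_of_mem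
        (show (1:ℝ) ∈ Ioc 0 1 from ⟨zero_lt_one, le_refl 1⟩)] with x hx
      exact sub_nonneg.mpr (nec_key H hx.1 hx.2).1.le
    have hG1 : 0 ≤ G 1 := ge_of_tendsto htend hev
    have : G 1 = 1 - (1+α) * (π/4) := by
      show (1:ℝ) - (1 + α*1^2) * arctan 1 = _
      rw [Real.arctan_one]; ring
    rw [this] at hG1
    have h5 : (1 + α) * π ≤ 4 := by nlinarith [pi_pos]
    rw [le_sub_iff_add_le, le_div_iff₀ pi_pos]
    linarith
  · set q : ℝ → ℝ := fun x => (β - 1/3) + (1/5 - β/3)*x^2 + (β/5)*x^4 with hq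
    have hqpos : ∀ x ∈ Ioo (0:ℝ) 1,
        0 ≤ (β - 1/3) + (1/5 - β/3)*x^2 + (β/5)*x^4 := by
      intro x hx
      obtain ⟨hx0, hx1⟩ := hx
      have h2 := (nec_key H hx0 hx1).2
      have harc := arctan_pos' hx0
      have hfac : 0 < 1 + β*x^2 := by
        by_contra hle
        push_neg at hle
        nlinarith [mul_nonpos_of_nonpos_of_nonneg hle harc.le]
      have hpoly := arctan_lt_poly hx0
      have h3 : x < (1+β*x^2)*(x - x^3/3 + x^5/5) :=
        h2.trans (mul_lt_mul_of_pos_left hpoly hfac)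
      have hx3 : (0:ℝ) < x^3 := by positivity
      by_contra hneg
      push_neg at hneg
      have h5 := mul_neg_of_pos_of_neg hx3 hneg
      nlinarith [h3, h5]
    have hqc : Continuous q := by
      apply Continuous.add
      apply Continuous.add continuous_const
      · exact continuous_const.mul (continuous_pow 2)
      · exact continuous_const.mul (continuous_pow 4)
    have htend : Filter.Tendsto q (nhdsWithin 0 (Ioi 0)) (nhds (q 0)) :=
      (hqc.tendsto 0).mono_left nhdsWithin_le_nhds
    have hev : ∀ᶠ x in nhdsWithin 0 (Ioi 0), 0 ≤ q x := by
      filter_upwards [Ioo_mem_nhdsGT_of_mem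
        (show (0:ℝ) ∈ Ico 0 1 from ⟨le_refl 0, zero_lt_one⟩)] with x hx
      simpa [hq] using hqpos x hx
    have hq0 : 0 ≤ q 0 := ge_of_tendsto htend hev
    have : q 0 = β - 1/3 := by simp [hq]
    rw [this] at hq0
    linarith

theorem stmt_9 (α₁ β₁ : ℝ) :
    (∀ a b : ℝ, 0 < a → 0 < b → a ≠ b →
        α₁ * contraharmonicMean a b + (1 - α₁) * arithMean a b < seiffertT a b ∧
        seiffertT a b < β₁ * contraharmonicMean a b + (1 - β₁) * arithMean a b) ↔
      (α₁ ≤ 4 / π - 1 ∧ 1 / 3 ≤ β₁) := by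
  constructor
  · exact nec
  · rintro ⟨hα, hβ⟩ a b ha hb hab
    rcases hab.lt_or_gt with h | h
    · rw [seiffertT_comm, arithMean_comm, contraharmonicMean_comm]
      exact suff_side hα hβ b a hb ha h
    · exact suff_side hα hβ a b ha hb h
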